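/- Let k, p ≥ 2 and let τ ∈ 𝒯(𝓛_p) be a type realized by some flat set of cardinality p (i.e. τ ∈ 𝒯_Fl[k,p]). Then the restriction of R_p to the flat sets of cardinality p and type τ is a bijection onto W(k, 𝓛_p, τ), the set of words over [k]∪𝓛_p of type τ. -/

import Mathlib

/-- The word representation `R_p(F)` of a flat set `F` of cardinality `p`:
order `F` lexicographically as `t₀ <lex … <lex t_{p−1}`; for each coordinate `i` form the
column `āᵢ = (a_{i,0},…,a_{i,p−1})`; output the letter `a ∈ [k]` (`Sum.inl`) if the column
is constant with value `a`, and the column itself (`Sum.inr`, a letter of `𝓛_p`) otherwise. -/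
def Rp (k p : ℕ) (hk : 0 < k) (hp : 0 < p) (F : Finset (List (Fin k))) :
    List (Fin k ⊕ (Fin p → Fin k)) :=
  (List.range ((F.sort (· ≤ ·)).headD []).length).map fun i =>
    let row : Fin p → Fin k := fun j => ((F.sort (· ≤ ·)).getD (j : ℕ) []).getD i ⟨0, hk⟩
    if ∀ j, row j = row ⟨0, hp⟩ then Sum.inl (row ⟨0, hp⟩) else Sum.inr row

/-- The type of a flat set `F` of cardinality `p`: the type of its word representation
`R_p(F)` (erase the letters of `[k]`, collapse runs of equal letters of `𝓛_p`). -/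
def flatType (k p : ℕ) (hk : 0 < k) (hp : 0 < p) (F : Finset (List (Fin k))) :
    List (Fin p → Fin k) :=
  ((Rp k p hk hp F).filterMap Sum.getRight?).destutter (· ≠ ·)


section aux

variable {k p : ℕ}

/-- The `j`-th row of a word. -/
private def rowOf (u : List (Fin k ⊕ (Fin p → Fin k))) (j : Fin p) : List (Fin k) :=
  u.map (Sum.elim id fun f => f j)

/-- The `i`-th column function used in `Rp`. -/
private def colOf (hk : 0 < k) (F : Finset (List (Fin k))) (i : ℕ) : Fin p → Fin k :=
  fun j => ((F.sort (· ≤ ·)).getD (j : ℕ) []).getD i ⟨0, hk⟩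

private lemma Rp_eq (hk : 0 < k) (hp : 0 < p) (F : Finset (List (Fin k))) :
    Rp k p hk hp F = (List.range ((F.sort (· ≤ ·)).headD []).length).map
      (fun i => if ∀ j, colOf (p := p) hk F i j = colOf (p := p) hk F i ⟨0, hp⟩
        then Sum.inl (colOf (p := p) hk F i ⟨0, hp⟩) else Sum.inr (colOf (p := p) hk F i)) := rfl

private lemma headD_eq_getElem {α} (l : List α) (d : α) (h : 0 < l.length) :
    l.headD d = l[0] := by
  cases l with
  | nil => simp at h
  | cons a t => rfl

private lemma length_rowOf (u : List (Fin k ⊕ (Fin p → Fin k))) (j : Fin p) :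
    (rowOf u j).length = u.length := List.length_map _

private lemma lex_cons_iff {a b : Fin k} {l m : List (Fin k)} :
    (a :: l) < (b :: m) ↔ a < b ∨ (a = b ∧ l < m) := by
  show List.Lex _ _ _ ↔ _ ∨ _ ∧ List.Lex _ _ _
  constructor
  · intro h
    cases h with
    | cons h => exact Or.inr ⟨rfl, h⟩
    | rel h => exact Or.inl h
  · rintro (h | ⟨rfl, h⟩)
    · exact List.Lex.rel h
    · exact List.Lex.cons h

private lemma not_nil_lt_nil : ¬ (([] : List (Fin k)) < []) := by
  show ¬ List.Lex _ _ _
  exact fun h => nomatch h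

private lemma find?_destutter' {α : Type*} [DecidableEq α] (q : α → Bool) :
    ∀ (l : List α) (a : α), ((List.destutter' (· ≠ ·) a l).find? q) = ((a :: l).find? q)
  | [], a => rfl
  | b :: l, a => by
    rw [List.destutter'_cons]
    by_cases hab : a ≠ b
    · rw [if_pos hab, List.find?_cons, List.find?_cons]
      cases hqa : q a
      · simpa using find?_destutter' q l b
      · rfl
    · push_neg at hab
      subst hab
      rw [if_neg (by simp), find?_destutter' q l a, List.find?_cons, List.find?_cons,
        List.find?_cons]
      cases hqa : q a <;> simp [hqa]

private lemma find?_destutter {α : Type*} [DecidableEq α] (q : α → Bool) (l : List α) :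
    ((l.destutter (· ≠ ·)).find? q) = l.find? q := by
  cases l with
  | nil => rfl
  | cons a l => rw [List.destutter_cons', find?_destutter']

private lemma row_lt_iff (u : List (Fin k ⊕ (Fin p → Fin k))) (j j' : Fin p) :
    rowOf u j < rowOf u j' ↔
      ∃ f, (u.filterMap Sum.getRight?).find? (fun f => f j ≠ f j') = some f ∧ f j < f j' := by
  induction u with
  | nil => simpa [rowOf] using not_nil_lt_nil
  | cons x u ih =>
    cases x with
    | inl a =>
      simp only [rowOf, List.map_cons, Sum.elim_inl, List.filterMap_cons,
        Sum.getRight?_inl] at *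
      rw [lex_cons_iff]
      simp [ih, id]
    | inr f =>
      simp only [rowOf, List.map_cons, Sum.elim_inr, List.filterMap_cons,
        Sum.getRight?_inr] at *
      rw [lex_cons_iff]
      by_cases hjj : f j = f j'
      · rw [List.find?_cons_of_neg (by simp [hjj])]
        simp [hjj, ih]
      · rw [List.find?_cons_of_pos (by simpa using hjj)]
        constructor
        · rintro (h | ⟨h, -⟩)
          · exact ⟨f, rfl, h⟩
          · exact absurd h hjj
        · rintro ⟨g, hg, hglt⟩
          cases hg
          exact Or.inl hglt

private lemma rowOf_Rp (hk : 0 < k) (hp : 0 < p) (F : Finset (List (Fin k)))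
    (hcard : F.card = p) {n : ℕ} (hlen : ∀ w ∈ F, w.length = n) (j : Fin p) :
    rowOf (Rp k p hk hp F) j = (F.sort (· ≤ ·)).getD (j : ℕ) [] := by
  have hslen : (F.sort (· ≤ ·)).length = p := by rw [Finset.length_sort, hcard]
  have hj : (j : ℕ) < (F.sort (· ≤ ·)).length := by rw [hslen]; exact j.isLt
  have hmemn : ∀ (j : Fin p), ((F.sort (· ≤ ·)).getD (j : ℕ) []).length = n := by
    intro j'
    rw [List.getD_eq_getElem _ _ (by rw [hslen]; exact j'.isLt)]
    exact hlen _ ((Finset.mem_sort _).mp (List.getElem_mem _))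
  have hheadn : ((F.sort (· ≤ ·)).headD []).length = n := by
    rw [headD_eq_getElem _ _ (by omega)]
    exact hlen _ ((Finset.mem_sort _).mp (List.getElem_mem _))
  apply List.ext_getElem
  · rw [length_rowOf, Rp_eq, List.length_map, List.length_range, hheadn, hmemn j]
  · intro i h1 h2
    have hin : i < n := by
      rwa [length_rowOf, Rp_eq, List.length_map, List.length_range, hheadn] at h1
    have hcol : ∀ j' : Fin p, colOf hk F i j' = ((F.sort (· ≤ ·)).getD (j' : ℕ) [])[i]'
        (by rw [hmemn j']; exact hin) := by
      intro j'
      exact List.getD_eq_getElem _ _ (by rw [hmemn j']; exact hin)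
    simp only [rowOf, Rp_eq, List.getElem_map, List.getElem_range]
    by_cases hc : ∀ j' : Fin p, colOf hk F i j' = colOf hk F i ⟨0, hp⟩
    · rw [if_pos hc, Sum.elim_inl, id, ← hc j, hcol j]
    · rw [if_neg hc, Sum.elim_inr, hcol j]

private lemma sort_eq_ofFn (hk : 0 < k) (hp : 0 < p) (F : Finset (List (Fin k)))
    (hcard : F.card = p) {n : ℕ} (hlen : ∀ w ∈ F, w.length = n) :
    F.sort (· ≤ ·) = List.ofFn (fun j : Fin p => rowOf (Rp k p hk hp F) j) := by
  have hslen : (F.sort (· ≤ ·)).length = p := by rw [Finset.length_sort, hcard]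
  apply List.ext_getElem
  · simp [hslen]
  · intro i h1 h2
    rw [List.getElem_ofFn, rowOf_Rp hk hp F hcard hlen,
      List.getD_eq_getElem _ _ (by simpa [hslen] using h1)]

end aux

/-- For `k, p ≥ 2` and a type `τ` of `W(k,𝓛_p)` realized by some flat
set of cardinality `p`, the restriction of `R_p` to the flat sets of cardinality `p` and
type `τ` is a bijection onto `W(k,𝓛_p,τ)`, the set of words over `[k] ∪ 𝓛_p` of type `τ`.
(Letters of `𝓛_p = [k]^p ∖ Δ([k]^p)` are the nonconstant `f : Fin p → Fin k`.) -/
theorem stmt_10 (k p : ℕ) (hk : 2 ≤ k) (hp : 2 ≤ p)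
    (τ : List (Fin p → Fin k)) (hτne : τ ≠ []) (hchain : τ.Chain' (· ≠ ·))
    (hletters : ∀ l ∈ τ, ¬ ∃ a : Fin k, ∀ j, l j = a)
    (hreal : ∃ F : Finset (List (Fin k)),
      (F.card = p ∧ ∃ n, ∀ w ∈ F, w.length = n) ∧
      flatType k p (by omega) (by omega) F = τ) :
    Set.BijOn (Rp k p (by omega) (by omega))
      {F : Finset (List (Fin k)) |
        (F.card = p ∧ ∃ n, ∀ w ∈ F, w.length = n) ∧
        flatType k p (by omega) (by omega) F = τ}
      {u : List (Fin k ⊕ (Fin p → Fin k)) |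
        (∀ x ∈ u, ∀ f : Fin p → Fin k, x = Sum.inr f → ¬ ∃ a : Fin k, ∀ j, f j = a) ∧
        (u.filterMap Sum.getRight?).destutter (· ≠ ·) = τ} := by
  have hk0 : 0 < k := by omega
  have hp0 : 0 < p := by omega
  -- the separation property of `τ`, extracted from the realizing flat set
  have hsep : ∀ j j' : Fin p, (j : ℕ) < (j' : ℕ) →
      ∃ f, τ.find? (fun f => f j ≠ f j') = some f ∧ f j < f j' := by
    intro j j' hjj
    obtain ⟨F₀, ⟨hc₀, n₀, hl₀⟩, hτ₀⟩ := hreal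
    have hs₀ : (F₀.sort (· ≤ ·)).Pairwise (· < ·) :=
      List.sortedLT_iff_pairwise.mp (Finset.sortedLT_sort _)
    have hslen : (F₀.sort (· ≤ ·)).length = p := by rw [Finset.length_sort, hc₀]
    have hlt : rowOf (Rp k p hk0 hp0 F₀) j < rowOf (Rp k p hk0 hp0 F₀) j' := by
      rw [rowOf_Rp hk0 hp0 F₀ hc₀ hl₀ j, rowOf_Rp hk0 hp0 F₀ hc₀ hl₀ j',
        List.getD_eq_getElem _ _ (by rw [hslen]; exact j.isLt),
        List.getD_eq_getElem _ _ (by rw [hslen]; exact j'.isLt)]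
      exact List.pairwise_iff_getElem.mp hs₀ _ _ _ _ hjj
    obtain ⟨f, hf, hflt⟩ := (row_lt_iff _ j j').mp hlt
    refine ⟨f, ?_, hflt⟩
    rw [← hτ₀]
    unfold flatType
    rw [find?_destutter]
    exact hf
  refine ⟨?_, ?_, ?_⟩
  · -- MapsTo
    rintro F ⟨⟨hcard, n, hlen⟩, hτF⟩
    refine ⟨?_, hτF⟩
    rintro x hx f rfl ⟨a, ha⟩
    rw [Rp_eq] at hx
    obtain ⟨i, -, hgi⟩ := List.mem_map.mp hx
    split at hgi
    · exact absurd hgi (by simp)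
    · rename_i hc
      injection hgi with h
      exact hc fun j => by rw [h, ha j, ha _]
  · -- InjOn
    rintro F ⟨⟨hcF, n, hlF⟩, -⟩ F' ⟨⟨hcF', n', hlF'⟩, -⟩ hFF
    have hFF' : Rp k p hk0 hp0 F = Rp k p hk0 hp0 F' := hFF
    calc F = (F.sort (· ≤ ·)).toFinset := (Finset.sort_toFinset _ _).symm
      _ = (F'.sort (· ≤ ·)).toFinset := by
          rw [sort_eq_ofFn hk0 hp0 F hcF hlF, hFF', ← sort_eq_ofFn hk0 hp0 F' hcF' hlF']
      _ = F' := Finset.sort_toFinset _ _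
  · -- SurjOn
    rintro u ⟨hulf, hutype⟩
    have hmono : ∀ j j' : Fin p, j < j' → rowOf u j < rowOf u j' := by
      intro j j' hjj
      rw [row_lt_iff]
      obtain ⟨f, hf, hflt⟩ := hsep j j' hjj
      exact ⟨f, by rw [← find?_destutter, hutype]; exact hf, hflt⟩
    have hinj : Function.Injective (rowOf u) := by
      intro a b hab
      by_contra hne
      rcases Ne.lt_or_gt hne with h | h
      · exact absurd hab (ne_of_lt (hmono _ _ h))
      · exact absurd hab.symm (ne_of_lt (hmono _ _ h))
    set F : Finset (List (Fin k)) := Finset.image (rowOf u) Finset.univ with hF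
    have hcard : F.card = p := by
      rw [hF, Finset.card_image_of_injective _ hinj, Finset.card_univ, Fintype.card_fin]
    have hlen : ∀ w ∈ F, w.length = u.length := by
      intro w hw
      obtain ⟨j, -, rfl⟩ := Finset.mem_image.mp hw
      exact length_rowOf u j
    have hsort : F.sort (· ≤ ·) = List.ofFn (rowOf u) := by
      refine (fun h1 h2 h3 => List.Perm.eq_of_pairwise' (r := (· ≤ ·)) h2 h3 h1) ?_ ?_ ?_
      · apply List.perm_of_nodup_nodup_toFinset_eq (Finset.sort_nodup _ _)
          (List.nodup_ofFn.mpr hinj)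
        rw [Finset.sort_toFinset]
        ext w
        simp [hF, List.mem_ofFn, eq_comm]
      · exact Finset.pairwise_sort _ _
      · exact List.pairwise_ofFn.mpr fun i j h => le_of_lt (hmono i j h)
    have hhead : (F.sort (· ≤ ·)).headD [] = rowOf u ⟨0, hp0⟩ := by
      rw [hsort, headD_eq_getElem _ _ (by simpa using hp0), List.getElem_ofFn]
    have hcol : ∀ (i : ℕ) (hi : i < u.length) (j : Fin p),
        colOf (p := p) hk0 F i j = Sum.elim id (fun f => f j) (u[i]'hi) := by
      intro i hi j
      show ((F.sort (· ≤ ·)).getD (j : ℕ) []).getD i ⟨0, hk0⟩ = _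
      have hgd : (List.ofFn (rowOf u)).getD (j : ℕ) [] = rowOf u j := by
        rw [List.getD_eq_getElem _ _ (by simpa using j.isLt), List.getElem_ofFn]
      rw [hsort, hgd, List.getD_eq_getElem _ _ (by rw [length_rowOf]; exact hi)]
      simp [rowOf]
    have hRpu : Rp k p hk0 hp0 F = u := by
      rw [Rp_eq]
      apply List.ext_getElem
      · rw [List.length_map, List.length_range, hhead, length_rowOf]
      · intro i h1 h2
        simp only [List.getElem_map, List.getElem_range]
        rcases hui : u[i] with a | f
        · have hcc : ∀ j : Fin p, colOf (p := p) hk0 F i j = a := by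
            intro j; rw [hcol i h2 j, hui]; rfl
          rw [if_pos (fun j => by rw [hcc j, hcc ⟨0, hp0⟩]), hcc ⟨0, hp0⟩]
        · have hcc : colOf (p := p) hk0 F i = f := by
            funext j; rw [hcol i h2 j, hui]; rfl
          have hnc : ¬ ∀ j : Fin p,
              colOf (p := p) hk0 F i j = colOf (p := p) hk0 F i ⟨0, hp0⟩ := by
            rw [hcc]
            intro hall
            exact hulf u[i] (List.getElem_mem _) f hui ⟨f ⟨0, hp0⟩, hall⟩
          rw [if_neg hnc, hcc]
    have hflat : flatType k p hk0 hp0 F = τ := by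
      unfold flatType
      rw [hRpu]
      exact hutype
    exact ⟨F, ⟨⟨hcard, ⟨u.length, hlen⟩⟩, hflat⟩, hRpu⟩
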